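/- Under the conditions of the eow-marking prefix-probability equivalence, the conditional probability of word w_t given context w_{<t} satisfies: p(w_t | w_{<t}) = ∏_{i=1}^{|s|} q(s_i | T(w_{<t}) ∘ s_{<i}), where s = τ(w_t) and q(v | x) denotes the conditional next-subword probability P_q(x ∘ v ∘ V*)/P_q(x ∘ V*), assuming all prefix probabilities are positive. -/

import Mathlib

open scoped ENNReal BigOperators

/-- Prefix probability of a sequence under a distribution over sequences. -/
noncomputable def prefP {A : Type*} (p : List A → ℝ≥0∞) (s : List A) : ℝ≥0∞ :=
  ∑' y : {y : List A // s <+: y}, p y.val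

/-- Conditional next-symbol probability. -/
noncomputable def condP {A : Type*} (p : List A → ℝ≥0∞) (v : A) (s : List A) : ℝ≥0∞ :=
  prefP p (s ++ [v]) / prefP p s

lemma prefP_eq_tsum {A : Type*} (p : List A → ℝ≥0∞) (s : List A) :
    prefP p s = ∑' y : List A, Set.indicator {y : List A | s <+: y} p y :=
  tsum_subtype {y : List A | s <+: y} p

lemma prod_div_telescope (f : ℕ → ℝ≥0∞) (n : ℕ)
    (h0 : ∀ i ≤ n, f i ≠ 0) (ht : ∀ i ≤ n, f i ≠ ∞) :
    ∏ i ∈ Finset.range n, f (i + 1) / f i = f n / f 0 := by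
  induction n with
  | zero => simp [ENNReal.div_self (h0 0 le_rfl) (ht 0 le_rfl)]
  | succ n ih =>
    rw [Finset.prod_range_succ,
      ih (fun i hi => h0 i (hi.trans n.le_succ)) (fun i hi => ht i (hi.trans n.le_succ)),
      mul_comm, ← mul_div_assoc,
      ENNReal.div_mul_cancel (h0 n n.le_succ) (ht n n.le_succ)]

theorem stmt_8 {L V : Type*} [Countable L] [Countable V] [DecidableEq V] (Vmid Veow : Set V)
    (hdisj : Disjoint Vmid Veow) (hcover : Vmid ∪ Veow = Set.univ)
    (τ : L → List V) (hτ : Function.Injective τ)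
    (hshape : ∀ w : L, ∃ (m : List V) (e : V),
      (∀ a ∈ m, a ∈ Vmid) ∧ e ∈ Veow ∧ τ w = m ++ [e])
    (p : List L → ℝ≥0∞) (hp : ∑' u : List L, p u = 1)
    (q : List V → ℝ≥0∞)
    (hq : ∀ x : List V, q x = ∑' u : List L, p u * (if x = (u.map τ).flatten then 1 else 0))
    (wlt : List L) (wt : L)
    (hposw : prefP p wlt ≠ 0)
    (hposq : ∀ s : List V, s <+: τ wt → prefP q ((wlt.map τ).flatten ++ s) ≠ 0) :
    prefP p (wlt ++ [wt]) / prefP p wlt =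
      ∏ i : Fin (τ wt).length,
        condP q ((τ wt).get i) ((wlt.map τ).flatten ++ (τ wt).take i) := by
  classical
  have hprefq0 : ∀ (t : List V), prefP q t = ∑' y : List V, if t <+: y then q y else 0 := by
    intro t; rw [prefP_eq_tsum]
    exact tsum_congr fun y => by by_cases h : t <+: y <;> simp [Set.indicator, h]
  have hprefp0 : ∀ (t : List L), prefP p t = ∑' y : List L, if t <+: y then p y else 0 := by
    intro t; rw [prefP_eq_tsum]
    exact tsum_congr fun y => by by_cases h : t <+: y <;> simp [Set.indicator, h]
  set T : List L → List V := fun u => (u.map τ).flatten with hT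
  -- τ of two letters: prefix implies equal
  have hτeq : ∀ a b : L, τ a <+: τ b → τ a = τ b := by
    intro a b hab
    obtain ⟨ma, ea, hma, hea, hta⟩ := hshape a
    obtain ⟨mb, eb, hmb, heb, htb⟩ := hshape b
    rcases eq_or_lt_of_le hab.length_le with hlen | hlen
    · exact hab.eq_of_length hlen
    · exfalso
      have hia : ma.length < (τ a).length := by simp [hta]
      have hib : ma.length < mb.length := by
        have : (τ a).length < (τ b).length := hlen
        simp [hta, htb] at this; omega
      have h1 : (τ a)[ma.length]'hia = ea := by
        rw [List.getElem_of_eq hta]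
        exact List.getElem_concat_length rfl (by simp)
      have h2 : (τ b)[ma.length]'(lt_trans hia hlen) = mb[ma.length]'hib := by
        rw [List.getElem_of_eq htb]
        exact List.getElem_append_left hib
      have h3 := hab.getElem hia
      have h4 : ea = mb[ma.length]'hib := h1.symm.trans (h3.trans h2)
      have h5 : ea ∈ Vmid := by rw [h4]; exact hmb _ (List.getElem_mem _)
      exact Set.disjoint_right.mp hdisj hea h5
  -- prefix equivalence for T
  have hTpre : ∀ w u : List L, T w <+: T u ↔ w <+: u := by
    intro w
    induction w with
    | nil => intro u; simp [hT]
    | cons a w' ih =>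
      intro u
      constructor
      · intro h
        cases u with
        | nil =>
          exfalso
          simp only [hT, List.map_cons, List.flatten_cons, List.map_nil, List.flatten_nil,
            List.prefix_nil, List.append_eq_nil_iff] at h
          obtain ⟨ma, ea, _, _, hta⟩ := hshape a
          simp [hta] at h
        | cons b u' =>
          simp only [hT, List.map_cons, List.flatten_cons] at h
          have h1 : τ a <+: τ b ++ (u'.map τ).flatten :=
            (List.prefix_append (τ a) _).trans h
          have h2 : τ b <+: τ b ++ (u'.map τ).flatten := List.prefix_append _ _
          have hab : τ a = τ b := by
            rcases List.prefix_or_prefix_of_prefix h1 h2 with h' | h'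
            · exact hτeq a b h'
            · exact (hτeq b a h').symm
          have hab' : a = b := hτ hab
          subst hab'
          rw [List.prefix_append_right_inj] at h
          exact List.cons_prefix_cons.mpr ⟨rfl, (ih u').mp h⟩
      · rintro ⟨r, hr⟩
        refine ⟨T r, ?_⟩
        rw [← hr]
        simp [hT, List.map_append]
  -- prefP q formula
  have hqform : ∀ x : List V, q x = ∑' u : List L, if x = T u then p u else 0 := by
    intro x
    rw [hq x]
    exact tsum_congr fun u => by by_cases h : x = T u <;> simp [h, hT]
  have hprefq : ∀ s : List V, prefP q s = ∑' u : List L, if s <+: T u then p u else 0 := by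
    intro s
    rw [hprefq0]
    have : ∀ y : List V, (if s <+: y then q y else 0)
        = ∑' u : List L, if s <+: y then (if y = T u then p u else 0) else 0 := by
      intro y
      by_cases h : s <+: y
      · simp only [h, if_true]; exact hqform y
      · simp [h]
    refine (tsum_congr this).trans ?_
    rw [ENNReal.tsum_comm]
    refine tsum_congr fun u => ?_
    rw [tsum_eq_single (T u) (fun y hy => by by_cases h : s <+: y <;> simp [h, hy])]
    by_cases h : s <+: T u <;> simp [h]
  -- prefix equivalence of probabilities
  have hequiv : ∀ w : List L, prefP q (T w) = prefP p w := by
    intro w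
    rw [hprefq, hprefp0]
    refine tsum_congr fun u => ?_
    by_cases h : w <+: u
    · simp [h, (hTpre w u).mpr h]
    · have h2 : ¬ T w <+: T u := fun hc => h ((hTpre w u).mp hc)
      simp [h, h2]
  -- prefP q is bounded by 1
  have hle1 : ∀ s : List V, prefP q s ≤ 1 := by
    intro s
    rw [hprefq]
    calc ∑' u : List L, (if s <+: T u then p u else 0)
        ≤ ∑' u : List L, p u :=
          ENNReal.tsum_le_tsum fun u => by by_cases h : s <+: T u <;> simp [h]
      _ = 1 := hp
  have hne_top : ∀ s : List V, prefP q s ≠ ∞ := fun s => ((hle1 s).trans_lt (by norm_num)).ne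
  -- the telescoping
  set x : List V := (wlt.map τ).flatten with hx
  set s : List V := τ wt with hs
  set n : ℕ := s.length with hn
  set f : ℕ → ℝ≥0∞ := fun i => prefP q (x ++ s.take i) with hf
  have hgoal : (∏ i : Fin n, condP q (s.get i) (x ++ s.take i))
      = ∏ i ∈ Finset.range n, f (i + 1) / f i := by
    rw [Finset.prod_range fun i => f (i + 1) / f i]
    refine Finset.prod_congr rfl fun i _ => ?_
    rw [condP, hf]
    congr 2
    rw [List.append_assoc]
    congr 1
    rw [← List.take_concat_get (l := s) (i := i) i.isLt]
    simp [List.concat_eq_append]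
  rw [hgoal, prod_div_telescope f n
    (fun i _ => by rw [hf]; exact hposq (s.take i) (List.take_prefix i s))
    (fun i _ => hne_top _)]
  have h0 : f 0 = prefP p wlt := by
    rw [hf]; simp only [List.take_zero, List.append_nil]
    exact hequiv wlt
  have hn' : f n = prefP p (wlt ++ [wt]) := by
    show prefP q (x ++ s.take s.length) = _
    rw [List.take_length]
    have : x ++ s = T (wlt ++ [wt]) := by
      simp [hT, hx, hs, List.map_append]
    rw [this]
    exact hequiv _
  rw [h0, hn']
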